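/- For a symmetric positive semidefinite n×n matrix K of rank at least k, the maximum over all n×k real matrices F of Tr[(FᵀK²F)(FᵀKF)⁻¹] equals the sum of the k largest eigenvalues of K. -/

import Mathlib

open Matrix BigOperators

private lemma diagonal_submatrix_inj {n k : ℕ} (v : Fin n → ℝ) (e : Fin k → Fin n)
    (he : Function.Injective e) :
    (diagonal v).submatrix e e = diagonal (v ∘ e) := by
  ext i j
  rcases eq_or_ne i j with rfl | h
  · simp
  · rw [Matrix.submatrix_apply, Matrix.diagonal_apply_ne _ (fun hc => h (he hc)),
      Matrix.diagonal_apply_ne _ h]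

private lemma max_subset {n k : ℕ} (hk0 : 0 < k) (hk : k ≤ n) (μ : Fin n → ℝ) :
    ∃ S₀ ∈ Finset.univ.powersetCard k,
      ((Finset.univ.powersetCard k).sup'
        ((Finset.powersetCard_nonempty (s := (Finset.univ : Finset (Fin n)))).mpr
          (by simpa using hk)) (fun S => ∑ i ∈ S, μ i) = ∑ i ∈ S₀, μ i) ∧
      ∀ i ∈ S₀, ∀ j, j ∉ S₀ → μ j ≤ μ i := by
  obtain ⟨S₀, hmem, hS₀⟩ := Finset.exists_mem_eq_sup'
    ((Finset.powersetCard_nonempty (s := (Finset.univ : Finset (Fin n)))).mpr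
      (by simpa using hk)) (fun S => ∑ i ∈ S, μ i)
  refine ⟨S₀, hmem, hS₀, ?_⟩
  have hcard : S₀.card = k := (Finset.mem_powersetCard.mp hmem).2
  intro i hi j hj
  have hmem' : insert j (S₀.erase i) ∈ Finset.univ.powersetCard k := by
    rw [Finset.mem_powersetCard]
    refine ⟨Finset.subset_univ _, ?_⟩
    rw [Finset.card_insert_of_notMem (fun h => hj (Finset.mem_of_mem_erase h)),
      Finset.card_erase_of_mem hi, hcard]
    omega
  have hle := Finset.le_sup' (fun S => ∑ i ∈ S, μ i) hmem'
  rw [hS₀] at hle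
  have h1 : ∑ x ∈ insert j (S₀.erase i), μ x = μ j + ∑ x ∈ S₀.erase i, μ x :=
    Finset.sum_insert (fun h => hj (Finset.mem_of_mem_erase h))
  have h2 : μ i + ∑ x ∈ S₀.erase i, μ x = ∑ x ∈ S₀, μ x := Finset.add_sum_erase _ _ hi
  simp only [h1] at hle
  linarith

private lemma comb_aux {n k : ℕ} (hk0 : 0 < k) (hk : k ≤ n) (μ c : Fin n → ℝ)
    (hc0 : ∀ i, 0 ≤ c i) (hc1 : ∀ i, c i ≤ 1) (hsum : ∑ i, c i = (k : ℝ)) :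
    ∑ i, μ i * c i ≤ (Finset.univ.powersetCard k).sup'
      ((Finset.powersetCard_nonempty (s := (Finset.univ : Finset (Fin n)))).mpr
        (by simpa using hk)) (fun S => ∑ i ∈ S, μ i) := by
  obtain ⟨S₀, hmem, hS₀, swap⟩ := max_subset hk0 hk μ
  rw [hS₀]
  have hcard : S₀.card = k := (Finset.mem_powersetCard.mp hmem).2
  have hne : S₀.Nonempty := Finset.card_pos.mp (by omega)
  set τ := S₀.inf' hne μ with hτ
  have hτle : ∀ i ∈ S₀, τ ≤ μ i := fun i hi => Finset.inf'_le μ hi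
  have hleτ : ∀ j, j ∉ S₀ → μ j ≤ τ := by
    intro j hj
    obtain ⟨i₀, hi₀, hi₀e⟩ := Finset.exists_mem_eq_inf' hne μ
    rw [hτ, hi₀e]
    exact swap i₀ hi₀ j hj
  have split : ∑ i, μ i * c i = ∑ i ∈ S₀, μ i * c i + ∑ i ∈ S₀ᶜ, μ i * c i :=
    (Finset.sum_add_sum_compl S₀ _).symm
  have splitc : ∑ i ∈ S₀, c i + ∑ i ∈ S₀ᶜ, c i = (k : ℝ) := by
    rw [Finset.sum_add_sum_compl]; exact hsum
  have h1 : ∑ i ∈ S₀, μ i * c i ≤ ∑ i ∈ S₀, (μ i + τ * (c i - 1)) := by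
    refine Finset.sum_le_sum fun i hi => ?_
    nlinarith [mul_nonneg (sub_nonneg.2 (hτle i hi)) (sub_nonneg.2 (hc1 i))]
  have h2 : ∑ i ∈ S₀ᶜ, μ i * c i ≤ ∑ i ∈ S₀ᶜ, τ * c i := by
    refine Finset.sum_le_sum fun i hi => ?_
    exact mul_le_mul_of_nonneg_right (hleτ i (Finset.mem_compl.mp hi)) (hc0 i)
  have e1 : ∑ i ∈ S₀, (μ i + τ * (c i - 1)) = ∑ i ∈ S₀, μ i + τ * (∑ i ∈ S₀, c i) - τ * k := by
    rw [Finset.sum_add_distrib, ← Finset.mul_sum, Finset.sum_sub_distrib]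
    simp [hcard, mul_sub]
    ring
  have e2 : ∑ i ∈ S₀ᶜ, τ * c i = τ * ∑ i ∈ S₀ᶜ, c i := by rw [Finset.mul_sum]
  rw [split]
  rw [e1] at h1
  rw [e2] at h2
  have key : τ * ∑ i ∈ S₀, c i + τ * ∑ i ∈ S₀ᶜ, c i = τ * k := by
    rw [← mul_add, splitc]
  linarith

theorem stmt_0 (n k : ℕ) (hk0 : 0 < k) (hk : k ≤ n)
    (K : Matrix (Fin n) (Fin n) ℝ) (hK : K.PosSemidef) (hrank : k ≤ K.rank) :
    IsGreatest
      {t : ℝ | ∃ F : Matrix (Fin n) (Fin k) ℝ, IsUnit (Fᵀ * K * F).det ∧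
        t = ((Fᵀ * (K * K) * F) * (Fᵀ * K * F)⁻¹).trace}
      ((Finset.univ.powersetCard k).sup'
        (Finset.powersetCard_nonempty.mpr (by simpa using hk))
        (fun S => ∑ i ∈ S, hK.1.eigenvalues i)) := by
  classical
  set μ := hK.1.eigenvalues with hμdef
  set V := (hK.1.eigenvectorUnitary : Matrix (Fin n) (Fin n) ℝ) with hVdef
  have hVtV : Vᵀ * V = 1 := by
    have := Matrix.mem_unitaryGroup_iff'.mp (hK.1.eigenvectorUnitary).2
    simpa [Matrix.star_eq_conjTranspose] using this
  have hVVt : V * Vᵀ = 1 := by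
    have := Matrix.mem_unitaryGroup_iff.mp (hK.1.eigenvectorUnitary).2
    simpa [Matrix.star_eq_conjTranspose] using this
  have hdiagK : Vᵀ * K * V = diagonal μ := by
    have := hK.1.conjStarAlgAut_star_eigenvectorUnitary
    simpa [Unitary.conjStarAlgAut_apply, Matrix.star_eq_conjTranspose, Function.comp] using this
  have hKeq : K = V * diagonal μ * Vᵀ := by
    have := hK.1.spectral_theorem
    simpa [Unitary.conjStarAlgAut_apply, Matrix.star_eq_conjTranspose, Function.comp] using this
  have hμ0 : ∀ i, 0 ≤ μ i := fun i => hK.eigenvalues_nonneg i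
  have hKsym : Kᵀ = K := by simpa using hK.1.eq
  constructor
  · -- membership: construct an F
    obtain ⟨S₀, hmem, hS₀, swap⟩ := max_subset hk0 hk μ
    have hcard : S₀.card = k := (Finset.mem_powersetCard.mp hmem).2
    have hpos : ∀ i ∈ S₀, 0 < μ i := by
      intro i hi
      rcases (hμ0 i).lt_or_eq with h | h
      · exact h
      · exfalso
        have hzero : μ i = 0 := h.symm
        have hrank' : k ≤ (Finset.univ.filter (fun i => μ i ≠ 0)).card := by
          calc k ≤ K.rank := hrank
            _ = (Finset.univ.filter (fun i => μ i ≠ 0)).card := by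
                rw [hK.1.rank_eq_card_non_zero_eigs, Fintype.card_subtype]
        set T := Finset.univ.filter (fun i => μ i ≠ 0) with hT
        by_cases hsub : T ⊆ S₀
        · have hsub' : T ⊆ S₀.erase i := by
            intro j hj
            refine Finset.mem_erase.mpr ⟨?_, hsub hj⟩
            rintro rfl
            exact (Finset.mem_filter.mp hj).2 hzero
          have := Finset.card_le_card hsub'
          rw [Finset.card_erase_of_mem hi, hcard] at this
          omega
        · obtain ⟨j, hjT, hjS⟩ := Finset.not_subset.mp hsub
          have h1 : μ j ≤ μ i := swap i hi j hjS
          have h2 : μ j ≠ 0 := (Finset.mem_filter.mp hjT).2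
          have h3 : 0 ≤ μ j := hμ0 j
          rw [hzero] at h1
          exact h2 (le_antisymm h1 h3)
    set e : Fin k → Fin n := fun j => ((S₀.orderIsoOfFin hcard) j : Fin n) with he
    have hinj : Function.Injective e := fun a b h =>
      (S₀.orderIsoOfFin hcard).injective (Subtype.ext h)
    have hemem : ∀ j, e j ∈ S₀ := fun j => ((S₀.orderIsoOfFin hcard) j).2
    set F : Matrix (Fin n) (Fin k) ℝ := V.submatrix id e with hF
    have hFt : Fᵀ = Vᵀ.submatrix e id := by rw [hF, Matrix.transpose_submatrix]
    have hmul : ∀ M : Matrix (Fin n) (Fin n) ℝ,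
        Fᵀ * M * F = (Vᵀ * M * V).submatrix e e := by
      intro M
      rw [hFt, hF]
      rw [show Vᵀ.submatrix e id * M = Vᵀ.submatrix e id * M.submatrix id id by
        rw [Matrix.submatrix_id_id]]
      rw [← Matrix.submatrix_mul _ _ _ _ _ Function.bijective_id]
      rw [← Matrix.submatrix_mul _ _ _ _ _ Function.bijective_id]
    have hc1 : Fᵀ * K * F = diagonal (μ ∘ e) := by
      rw [hmul, hdiagK, diagonal_submatrix_inj _ _ hinj]
    have hKK : Vᵀ * (K * K) * V = diagonal (fun i => μ i * μ i) := by
      have : Vᵀ * (K * K) * V = (Vᵀ * K * V) * (Vᵀ * K * V) := by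
        simp only [Matrix.mul_assoc]
        rw [← Matrix.mul_assoc V Vᵀ, hVVt, Matrix.one_mul]
      rw [this, hdiagK, Matrix.diagonal_mul_diagonal]
    have hc2 : Fᵀ * (K * K) * F = diagonal (fun j => μ (e j) * μ (e j)) := by
      rw [hmul, hKK, diagonal_submatrix_inj _ _ hinj]
      rfl
    have hne : ∀ j, μ (e j) ≠ 0 := fun j => ne_of_gt (hpos _ (hemem j))
    have hdetu : IsUnit (Fᵀ * K * F).det := by
      rw [hc1, Matrix.det_diagonal]
      exact (Finset.prod_ne_zero_iff.mpr (fun j _ => hne j)).isUnit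
    refine ⟨F, hdetu, ?_⟩
    have hinv : (Fᵀ * K * F)⁻¹ = diagonal (fun j => (μ (e j))⁻¹) := by
      rw [hc1]
      apply Matrix.inv_eq_right_inv
      rw [Matrix.diagonal_mul_diagonal]
      convert Matrix.diagonal_one with j
      exact mul_inv_cancel₀ (hne j)
    rw [hc2, hinv, Matrix.diagonal_mul_diagonal]
    have htr : (diagonal (fun j => μ (e j) * μ (e j) * (μ (e j))⁻¹)).trace
        = ∑ j, μ (e j) := by
      rw [Matrix.trace_diagonal]
      refine Finset.sum_congr rfl fun j _ => ?_
      field_simp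
    rw [htr, hS₀]
    rw [← Finset.sum_coe_sort S₀ μ]
    exact (Fintype.sum_equiv (S₀.orderIsoOfFin hcard).toEquiv
      (fun j => μ (e j)) (fun i => μ (i : Fin n)) (fun j => rfl)).symm
  · -- upper bound
    rintro t ⟨F, hdet, rfl⟩
    set D := diagonal μ with hD
    set R : Matrix (Fin n) (Fin n) ℝ := diagonal (fun i => Real.sqrt (μ i)) with hR
    set G := R * (Vᵀ * F) with hG
    set B := Fᵀ * K * F with hB
    have hRR : R * R = D := by
      rw [hR, hD, Matrix.diagonal_mul_diagonal]
      exact congrArg Matrix.diagonal (funext fun i => Real.mul_self_sqrt (hμ0 i))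
    have hGT : Gᵀ = Fᵀ * V * R := by
      rw [hG]
      simp [Matrix.transpose_mul, Matrix.mul_assoc, hR, Matrix.diagonal_transpose]
    have hGtG : Gᵀ * G = B := by
      calc Gᵀ * G = Fᵀ * (V * ((R * R) * (Vᵀ * F))) := by
            rw [hGT, hG]; simp only [Matrix.mul_assoc]
        _ = B := by rw [hRR, hB, hKeq]; simp only [Matrix.mul_assoc]
    have hRDR : R * (D * R) = D * D := by
      rw [hR, hD, Matrix.diagonal_mul_diagonal, Matrix.diagonal_mul_diagonal,
        Matrix.diagonal_mul_diagonal]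
      exact congrArg Matrix.diagonal (funext fun i => by
        linear_combination (μ i) * Real.mul_self_sqrt (hμ0 i))
    have hGtDG : Gᵀ * D * G = Fᵀ * (K * K) * F := by
      calc Gᵀ * D * G = Fᵀ * (V * ((R * (D * R)) * (Vᵀ * F))) := by
            rw [hGT, hG]; simp only [Matrix.mul_assoc]
        _ = Fᵀ * (V * ((D * D) * (Vᵀ * F))) := by rw [hRDR]
        _ = Fᵀ * (K * K) * F := by
            rw [hKeq]
            simp only [← Matrix.mul_assoc]
            rw [Matrix.mul_assoc (Fᵀ * V * D) Vᵀ V, hVtV, Matrix.mul_one]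
    have hBi : B * B⁻¹ = 1 := Matrix.mul_nonsing_inv _ hdet
    have hiB : B⁻¹ * B = 1 := Matrix.nonsing_inv_mul _ hdet
    set P := G * B⁻¹ * Gᵀ with hP
    have hPP : P * P = P := by
      rw [hP]
      simp only [Matrix.mul_assoc]
      rw [← Matrix.mul_assoc Gᵀ G (B⁻¹ * Gᵀ), hGtG, ← Matrix.mul_assoc B⁻¹ B, hiB,
        Matrix.one_mul]
    have hBt : Bᵀ = B := by
      rw [hB]
      simp [Matrix.transpose_mul, Matrix.mul_assoc, hKsym]
    have hBit : (B⁻¹)ᵀ = B⁻¹ := by rw [Matrix.transpose_nonsing_inv, hBt]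
    have hPt : Pᵀ = P := by
      rw [hP]
      simp [Matrix.transpose_mul, Matrix.mul_assoc, hBit]
    have hsymm : ∀ a b, P b a = P a b := fun a b => by
      rw [← congrFun (congrFun hPt a) b, Matrix.transpose_apply]
    have key : ∀ i, P i i = ∑ j, (P i j) ^ 2 := by
      intro i
      conv_lhs => rw [← hPP]
      rw [Matrix.mul_apply]
      exact Finset.sum_congr rfl fun j _ => by rw [hsymm i j, sq]
    have hc0 : ∀ i, 0 ≤ P i i := fun i =>
      (key i) ▸ Finset.sum_nonneg fun j _ => sq_nonneg _
    have hc1 : ∀ i, P i i ≤ 1 := by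
      intro i
      have h2 : (P i i) ^ 2 ≤ P i i := by
        conv_rhs => rw [key i]
        exact Finset.single_le_sum (f := fun j => (P i j) ^ 2)
          (fun j _ => sq_nonneg _) (Finset.mem_univ i)
      nlinarith [hc0 i]
    have htr : ∑ i, P i i = (k : ℝ) := by
      have h1 : P.trace = (k : ℝ) := by
        calc P.trace = ((B⁻¹ * Gᵀ) * G).trace := by
              rw [hP, Matrix.mul_assoc, Matrix.trace_mul_comm]
          _ = (B⁻¹ * B).trace := by rw [Matrix.mul_assoc, hGtG]
          _ = (k : ℝ) := by rw [hiB, Matrix.trace_one]; simp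
      simpa [Matrix.trace, Matrix.diag] using h1
    have hteq : ((Fᵀ * (K * K) * F) * B⁻¹).trace = ∑ i, μ i * P i i := by
      rw [← hGtDG]
      calc (Gᵀ * D * G * B⁻¹).trace = (Gᵀ * (D * (G * B⁻¹))).trace := by
            simp only [Matrix.mul_assoc]
        _ = ((D * (G * B⁻¹)) * Gᵀ).trace := Matrix.trace_mul_comm _ _
        _ = (D * P).trace := by rw [hP]; simp only [Matrix.mul_assoc]
        _ = ∑ i, μ i * P i i := by
            rw [Matrix.trace]
            refine Finset.sum_congr rfl fun i _ => ?_
            simp [Matrix.diag, hD, Matrix.diagonal_mul]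
    rw [hteq]
    exact comb_aux hk0 hk μ (fun i => P i i) hc0 hc1 htr
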